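/- Let d > 0, ρ ≥ 0 be reals and let ϑ be a real with 1 < ϑ < (2 + √32)/7. Then there exists a constant K > 0 (depending only on ϑ, d, ρ) such that for every real P > 0 there exist positive reals T₁, T_listen, T₂, τ, T_consensus, T_wait, T_active, each at most K·(P + 1), satisfying: T₁ = 3ϑd; T_listen = (ϑ − 1)T₁ + 3ϑd; T₂ > ϑ(T_listen + 3T₁ + 3d); (2/ϑ − 1)T₂ > 2T_listen + T_consensus + 5T₁ + 4d; τ = max{(1 − 1/ϑ)T₂ + T_listen + d + max{T_listen + d, 3T₁ + 2d}, (1 − 1/ϑ)T_active + ρ}; T_consensus = ϑ(τ + P); T_wait = T₂ + T_consensus; T_active ≥ 4T₂ + T_listen + ϑ(T_listen + T_wait − 5T₁ − 4d + ρ); and T_active ≥ 2T₂ + T_consensus + ϑ(2T_listen + T₁ + T_wait + 3d + 2T₂ + 2T_consensus). -/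

import Mathlib

lemma fp_max (s1 s2 a1 a2 τ : ℝ) (hs1 : s1 < 1) (hs2 : s2 < 1)
    (hτ : τ = max (a1 / (1 - s1)) (a2 / (1 - s2))) :
    τ = max (s1 * τ + a1) (s2 * τ + a2) := by
  have h1 : (0:ℝ) < 1 - s1 := by linarith
  have h2 : (0:ℝ) < 1 - s2 := by linarith
  set τ1 := a1 / (1 - s1) with hτ1
  set τ2 := a2 / (1 - s2) with hτ2
  have e1 : s1 * τ1 + a1 = τ1 := by rw [hτ1]; field_simp; ring
  have e2 : s2 * τ2 + a2 = τ2 := by rw [hτ2]; field_simp; ring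
  rcases le_total τ1 τ2 with h | h
  · have hm : τ = τ2 := by rw [hτ, max_eq_right h]
    rw [hm, e2]
    have hle : s1 * τ2 + a1 ≤ τ2 := by nlinarith [mul_nonneg h1.le (sub_nonneg.2 h)]
    exact (max_eq_right hle).symm
  · have hm : τ = τ1 := by rw [hτ, max_eq_left h]
    rw [hm, e1]
    have hle : s2 * τ1 + a2 ≤ τ1 := by nlinarith [mul_nonneg h2.le (sub_nonneg.2 h)]
    exact (max_eq_left hle).symm

theorem pulse_constraints_satisfiable (d ρ ϑ : ℝ) (hd : 0 < d) (hρ : 0 ≤ ρ)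
    (h1 : 1 < ϑ) (h2 : ϑ < (2 + Real.sqrt 32) / 7) :
    ∃ K : ℝ, 0 < K ∧ ∀ P : ℝ, 0 < P →
      ∃ T₁ Tlisten T₂ τ Tconsensus Twait Tactive : ℝ,
        0 < T₁ ∧ 0 < Tlisten ∧ 0 < T₂ ∧ 0 < τ ∧ 0 < Tconsensus ∧ 0 < Twait ∧ 0 < Tactive ∧
        T₁ ≤ K * (P + 1) ∧ Tlisten ≤ K * (P + 1) ∧ T₂ ≤ K * (P + 1) ∧
        τ ≤ K * (P + 1) ∧ Tconsensus ≤ K * (P + 1) ∧ Twait ≤ K * (P + 1) ∧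
        Tactive ≤ K * (P + 1) ∧
        T₁ = 3 * ϑ * d ∧
        Tlisten = (ϑ - 1) * T₁ + 3 * ϑ * d ∧
        T₂ > ϑ * (Tlisten + 3 * T₁ + 3 * d) ∧
        (2 / ϑ - 1) * T₂ > 2 * Tlisten + Tconsensus + 5 * T₁ + 4 * d ∧
        τ = max ((1 - 1 / ϑ) * T₂ + Tlisten + d + max (Tlisten + d) (3 * T₁ + 2 * d))
              ((1 - 1 / ϑ) * Tactive + ρ) ∧
        Tconsensus = ϑ * (τ + P) ∧
        Twait = T₂ + Tconsensus ∧
        Tactive ≥ 4 * T₂ + Tlisten + ϑ * (Tlisten + Twait - 5 * T₁ - 4 * d + ρ) ∧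
        Tactive ≥ 2 * T₂ + Tconsensus +
          ϑ * (2 * Tlisten + T₁ + Twait + 3 * d + 2 * T₂ + 2 * Tconsensus) := by
  -- basic bounds on ϑ
  have hsq : Real.sqrt 32 * Real.sqrt 32 = 32 := Real.mul_self_sqrt (by norm_num)
  have hr0 := Real.sqrt_nonneg 32
  have h7 : 7 * ϑ < 2 + Real.sqrt 32 := by
    have := (lt_div_iff₀ (by norm_num : (0:ℝ) < 7)).mp h2
    linarith
  have hD : 0 < 4 + 4*ϑ - 7*ϑ^2 := by
    nlinarith only [hsq, hr0, h7, h1,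
      mul_pos (show (0:ℝ) < 2 + Real.sqrt 32 - 7*ϑ by linarith)
        (show (0:ℝ) < 7*ϑ - 2 + Real.sqrt 32 by nlinarith only [h1, hr0])]
  have htlt : ϑ < 8/7 := by nlinarith only [hD, h1]
  have h2t : 0 < 2 - ϑ := by linarith
  have h2t2 : 0 < 2 - ϑ^2 := by nlinarith only [htlt, h1]
  have ht0 : 0 < ϑ := by linarith
  have ht1 : 0 ≤ ϑ - 1 := by linarith
  have hq2 : 1 < ϑ^2 := by nlinarith only [h1]
  have hq3 : 1 < ϑ^3 := by nlinarith only [h1, hq2]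
  -- P-independent constants
  obtain ⟨M, hM⟩ : ∃ x : ℝ, x = 9*ϑ*d + 2*d := ⟨_, rfl⟩
  obtain ⟨c₂, hc₂⟩ : ∃ x : ℝ, x = 6*ϑ^2*d + 15*ϑ*d + 5*d := ⟨_, rfl⟩
  obtain ⟨C₂, hC₂⟩ : ∃ x : ℝ, x = ϑ*(6*ϑ^2*d + 3*ϑ*d + 3*d + ρ) + 3*ϑ^2*d := ⟨_, rfl⟩
  obtain ⟨s1, hs1def⟩ : ∃ x : ℝ, x = (ϑ-1)*ϑ/(2-ϑ) := ⟨_, rfl⟩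
  obtain ⟨s2, hs2def⟩ : ∃ x : ℝ, x = (ϑ-1)*(7*ϑ+2)/(2-ϑ) := ⟨_, rfl⟩
  obtain ⟨u1, hu1def⟩ : ∃ x : ℝ, x = (ϑ-1)*ϑ/(2-ϑ^2) := ⟨_, rfl⟩
  obtain ⟨v1, hv1def⟩ : ∃ x : ℝ, x = ((ϑ-1)*c₂ + (2-ϑ)*(3*ϑ^2*d + d + M))/(2-ϑ^2) := ⟨_, rfl⟩
  obtain ⟨u2, hu2def⟩ : ∃ x : ℝ, x = (ϑ-1)*(7*ϑ+2)/(4+4*ϑ-7*ϑ^2) := ⟨_, rfl⟩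
  obtain ⟨v2, hv2def⟩ : ∃ x : ℝ,
      x = ((ϑ-1)*(2+3*ϑ)*c₂ + (2-ϑ)*((ϑ-1)*C₂/ϑ + ρ))/(4+4*ϑ-7*ϑ^2) := ⟨_, rfl⟩
  obtain ⟨W, hWdef⟩ : ∃ x : ℝ, x = (7*ϑ+2)*ϑ/(2-ϑ) := ⟨_, rfl⟩
  obtain ⟨h₀, hh0def⟩ : ∃ x : ℝ, x = (2+3*ϑ)*ϑ*c₂/(2-ϑ) + C₂ := ⟨_, rfl⟩
  have hc₂pos : 0 < c₂ := by
    rw [hc₂]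
    nlinarith only [mul_pos ht0 hd, mul_pos (mul_pos ht0 ht0) hd, hd]
  have hC₂pos : 0 < C₂ := by
    rw [hC₂]
    nlinarith only [mul_pos (mul_pos (mul_pos ht0 ht0) ht0) hd, mul_pos (mul_pos ht0 ht0) hd,
      mul_pos ht0 hd, mul_nonneg ht0.le hρ]
  have hMpos : 0 < M := by
    rw [hM]; nlinarith only [mul_pos ht0 hd, hd]
  have hu1 : 0 ≤ u1 := by
    rw [hu1def]; exact div_nonneg (mul_nonneg ht1 ht0.le) h2t2.le
  have hu2 : 0 ≤ u2 := by
    rw [hu2def]; exact div_nonneg (mul_nonneg ht1 (by linarith)) hD.le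
  have hv1 : 0 < v1 := by
    rw [hv1def]
    refine div_pos ?_ h2t2
    have hx : 0 < 3*ϑ^2*d + d + M := by
      nlinarith only [mul_pos (mul_pos ht0 ht0) hd, hd, hMpos]
    nlinarith only [mul_nonneg ht1 hc₂pos.le, mul_pos h2t hx]
  have hv2 : 0 ≤ v2 := by
    rw [hv2def]
    refine div_nonneg ?_ hD.le
    have hy : 0 ≤ (ϑ-1)*C₂/ϑ + ρ := by
      have := div_nonneg (mul_nonneg ht1 hC₂pos.le) ht0.le
      linarith
    nlinarith only [mul_nonneg (mul_nonneg ht1 (by linarith : (0:ℝ) ≤ 2+3*ϑ)) hc₂pos.le,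
      mul_nonneg h2t.le hy]
  have hW : 0 ≤ W := by
    rw [hWdef]; exact div_nonneg (mul_nonneg (by linarith) ht0.le) h2t.le
  have hW1 : 1 ≤ W := by
    rw [hWdef, le_div_iff₀ h2t]
    nlinarith only [h1, mul_self_nonneg (ϑ-1)]
  have hh0 : 0 < h₀ := by
    rw [hh0def]
    have : 0 ≤ (2+3*ϑ)*ϑ*c₂/(2-ϑ) :=
      div_nonneg (mul_nonneg (mul_nonneg (by linarith) ht0.le) hc₂pos.le) h2t.le
    linarith
  refine ⟨W*(u1+u2+1) + W*(v1+v2) + h₀ + 1, ?_, ?_⟩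
  · have h3 : 0 ≤ W*(u1+u2+1) := mul_nonneg hW (by linarith)
    have h4 : 0 ≤ W*(v1+v2) := mul_nonneg hW (by linarith)
    linarith only [h3, h4, hh0]
  intro P hP
  obtain ⟨a1, ha1def⟩ : ∃ x : ℝ, x = (ϑ-1)*(ϑ*P+c₂)/(2-ϑ) + (3*ϑ^2*d + d + M) := ⟨_, rfl⟩
  obtain ⟨a2, ha2def⟩ : ∃ x : ℝ,
      x = (ϑ-1)*(2+3*ϑ)*(ϑ*P+c₂)/(2-ϑ) + (ϑ-1)*(1+3*ϑ)*P + (ϑ-1)*C₂/ϑ + ρ := ⟨_, rfl⟩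
  obtain ⟨τ, hτdef⟩ : ∃ x : ℝ, x = max (a1/(1-s1)) (a2/(1-s2)) := ⟨_, rfl⟩
  obtain ⟨Tc, hTcdef⟩ : ∃ x : ℝ, x = ϑ*(τ+P) := ⟨_, rfl⟩
  obtain ⟨T₂, hT₂def⟩ : ∃ x : ℝ, x = ϑ*(Tc+c₂)/(2-ϑ) := ⟨_, rfl⟩
  obtain ⟨Ta, hTadef⟩ : ∃ x : ℝ, x = (2+3*ϑ)*T₂ + (1+3*ϑ)*Tc + C₂ := ⟨_, rfl⟩
  have hs1lt : s1 < 1 := by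
    rw [hs1def, div_lt_one h2t]; nlinarith only [h2t2]
  have hs2lt : s2 < 1 := by
    rw [hs2def, div_lt_one h2t]; nlinarith only [hD]
  have h1s1 : 0 < 1 - s1 := by linarith
  have h1s2 : 0 < 1 - s2 := by linarith
  have hfix := fp_max s1 s2 a1 a2 τ hs1lt hs2lt hτdef
  have hτ1eq : a1/(1-s1) = u1*P + v1 := by
    rw [div_eq_iff h1s1.ne', ha1def, hs1def, hu1def, hv1def]
    field_simp
    ring
  have hτ2eq : a2/(1-s2) = u2*P + v2 := by
    rw [div_eq_iff h1s2.ne', ha2def, hs2def, hu2def, hv2def]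
    field_simp [hD.ne', h2t.ne', ht0.ne']
    have hinv : (4 + ϑ * 4 - ϑ ^ 2 * 7) * (4 + ϑ * 4 - ϑ ^ 2 * 7)⁻¹ = 1 :=
      mul_inv_cancel₀ (by nlinarith only [hD])
    linear_combination (-(-(ϑ * P * 2) - ϑ * c₂ * 2 + ϑ * C₂ * 3 + ϑ * ρ * 2 - ϑ ^ 2 * P * 5
      - ϑ ^ 2 * c₂ - ϑ ^ 2 * C₂ - ϑ ^ 2 * ρ + ϑ ^ 3 * P * 7 + ϑ ^ 3 * c₂ * 3 - C₂ * 2)) * hinv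
  have hτge : u1*P + v1 ≤ τ := by
    rw [hτdef, ← hτ1eq]; exact le_max_left _ _
  have hτpos : 0 < τ :=
    lt_of_lt_of_le (by linarith only [mul_nonneg hu1 hP.le, hv1]) hτge
  have hτle : τ ≤ (u1+u2)*P + (v1+v2) := by
    rw [hτdef]
    refine max_le ?_ ?_
    · rw [hτ1eq]; linarith only [mul_nonneg hu2 hP.le, hv2]
    · rw [hτ2eq]; linarith only [mul_nonneg hu1 hP.le, hv1]
  have hTcpos : 0 < Tc := by
    rw [hTcdef]; exact mul_pos ht0 (by linarith only [hτpos, hP])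
  have hT₂pos : 0 < T₂ := by
    rw [hT₂def]
    exact div_pos (mul_pos ht0 (by linarith only [hTcpos, hc₂pos])) h2t
  have hT₂gt : c₂ < T₂ := by
    rw [hT₂def, lt_div_iff₀ h2t]
    linarith only [mul_pos ht0 hTcpos, mul_nonneg ht1 hc₂pos.le]
  have hTapos : 0 < Ta := by
    rw [hTadef]
    linarith only [mul_pos ht0 hT₂pos, mul_pos ht0 hTcpos, hT₂pos, hTcpos, hC₂pos]
  have hTaform : Ta = W*(τ+P) + h₀ := by
    rw [hTadef, hT₂def, hTcdef, hWdef, hh0def]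
    field_simp
    ring
  have hTaK : Ta ≤ (W*(u1+u2+1) + W*(v1+v2) + h₀ + 1)*(P+1) := by
    have h5 : W*(τ+P) ≤ W*((u1+u2)*P + (v1+v2) + P) :=
      mul_le_mul_of_nonneg_left (by linarith only [hτle]) hW
    have h6 : 0 ≤ W*(u1+u2) := mul_nonneg hW (by linarith only [hu1, hu2])
    have h7 : 0 ≤ W*(v1+v2) := mul_nonneg hW (by linarith only [hv1, hv2])
    nlinarith only [hTaform, h5, h6, h7, mul_nonneg h7 hP.le, mul_nonneg hh0.le hP.le,
      mul_nonneg h6 hP.le, hP, hW, hh0]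
  have hTaLB : T₂ + Tc + C₂ ≤ Ta := by
    rw [hTadef]
    linarith only [mul_pos ht0 hT₂pos, mul_pos ht0 hTcpos, hT₂pos, hTcpos]
  have hd1 : 3*ϑ*d ≤ c₂ := by
    rw [hc₂]
    linarith only [mul_pos ht0 hd, mul_pos (mul_pos ht0 ht0) hd, hd,
      mul_nonneg (mul_nonneg ht0.le ht0.le) hd.le]
  have hd2 : 3*ϑ^2*d ≤ c₂ := by
    rw [hc₂]
    linarith only [mul_pos ht0 hd, mul_pos (mul_pos ht0 ht0) hd, hd,
      mul_nonneg (mul_nonneg ht0.le ht0.le) hd.le]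
  have hτTa : τ ≤ Ta := by
    have hmul := mul_le_mul_of_nonneg_right hW1
      (show (0:ℝ) ≤ τ + P by linarith only [hτpos, hP])
    rw [hTaform]
    linarith only [hmul, hP, hh0]
  -- all seven quantities are at most Ta
  have b1 : 3*ϑ*d ≤ Ta := by linarith only [hd1, hT₂gt, hTaLB, hTcpos, hC₂pos]
  have b2 : 3*ϑ^2*d ≤ Ta := by linarith only [hd2, hT₂gt, hTaLB, hTcpos, hC₂pos]
  have b3 : T₂ ≤ Ta := by linarith only [hTaLB, hTcpos, hC₂pos]
  have b5 : Tc ≤ Ta := by linarith only [hTaLB, hT₂pos, hC₂pos]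
  have b6 : T₂ + Tc ≤ Ta := by linarith only [hTaLB, hC₂pos]
  refine ⟨3*ϑ*d, 3*ϑ^2*d, T₂, τ, Tc, T₂ + Tc, Ta,
    by positivity, by positivity, hT₂pos, hτpos, hTcpos,
    by linarith only [hT₂pos, hTcpos], hTapos,
    by linarith only [b1, hTaK], by linarith only [b2, hTaK], by linarith only [b3, hTaK],
    by linarith only [hτTa, hTaK], by linarith only [b5, hTaK], by linarith only [b6, hTaK],
    hTaK, rfl, by ring, ?_, ?_, ?_, hTcdef, rfl, ?_, ?_⟩
  -- T₂ > ϑ * (Tlisten + 3T₁ + 3d)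
  · rw [gt_iff_lt, hT₂def, lt_div_iff₀ h2t, hc₂]
    have hcube : 0 < 3*ϑ^3 + 9*ϑ^2 - 1 := by linarith only [hq2, hq3]
    linarith only [mul_pos ht0 hTcpos, mul_pos (mul_pos hd ht0) hcube]
  -- (2/ϑ - 1) * T₂ > ...
  · have heq : (2/ϑ - 1) * T₂ = Tc + c₂ := by
      rw [hT₂def]; field_simp
    rw [gt_iff_lt, heq, hc₂]
    linarith only [hd]
  -- τ = max A B
  · have hMre : max (3*ϑ^2*d + d) (3*(3*ϑ*d) + 2*d) = 3*(3*ϑ*d) + 2*d := by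
      apply max_eq_right
      have := mul_nonneg (mul_nonneg ht0.le hd.le) (show (0:ℝ) ≤ 9 - 3*ϑ by linarith)
      nlinarith only [this, hd]
    rw [hMre]
    have hA : (1 - 1/ϑ) * T₂ + 3*ϑ^2*d + d + (3*(3*ϑ*d) + 2*d) = s1*τ + a1 := by
      rw [hT₂def, hTcdef, hs1def, ha1def, hM]
      field_simp
      ring
    have hB : (1 - 1/ϑ) * Ta + ρ = s2*τ + a2 := by
      rw [hTadef, hT₂def, hTcdef, hs2def, ha2def]
      field_simp
      ring
    rw [hA, hB]
    exact hfix
  -- Tactive ≥ RHS1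
  · rw [ge_iff_le, hTadef, hC₂]
    linarith only [mul_nonneg ht1 hT₂pos.le, mul_pos ht0 hTcpos, hTcpos,
      mul_pos (mul_pos (mul_pos ht0 ht0) ht0) hd, mul_pos (mul_pos ht0 ht0) hd,
      mul_pos ht0 hd]
  -- Tactive ≥ RHS2
  · rw [ge_iff_le, hTadef, hC₂]
    linarith only [mul_nonneg ht0.le hρ, mul_pos (mul_pos ht0 ht0) hd]
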